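/- Let n ≥ 5 and let i be an integer with 3 ≤ i ≤ n-2, and set z = (i-2, i+1)(i-1, i+2) ∈ S_n. Then z consecutively contains none of the patterns 2143, 14325, 1536247, 1462537. -/

import Mathlib

/-- The longest element `w₀` of the symmetric group on `Fin n`,
sending `t` to `n - 1 - t` (`0`-based), i.e. `t ↦ n + 1 - t` in `1`-based terms. -/
def w0 (n : ℕ) : Equiv.Perm (Fin n) :=
  ⟨Fin.rev, Fin.rev, fun x => Fin.rev_rev x, fun x => Fin.rev_rev x⟩

/-- The Coxeter length of a permutation: its number of inversions. -/
def len {n : ℕ} (x : Equiv.Perm (Fin n)) : ℕ :=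
  (Finset.univ.filter fun ab : Fin n × Fin n => ab.1 < ab.2 ∧ x ab.2 < x ab.1).card

/-- The pattern `p ∈ S_m` consecutively appears in `x ∈ S_n` at (`1`-based) position `i`.
Permutations of `{1, …, N}` are modelled (`0`-based) as permutations of `Fin N`. -/
def consecAppearsAt {m n : ℕ} (p : Equiv.Perm (Fin m)) (x : Equiv.Perm (Fin n)) (i : ℕ) :
    Prop :=
  ∃ h : 1 ≤ i ∧ i + m ≤ n + 1,
    ∀ a b : Fin m,
      p a < p b ↔
        x ⟨i - 1 + a.val, by have := a.isLt; omega⟩ <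
          x ⟨i - 1 + b.val, by have := b.isLt; omega⟩

/-- `x` consecutively contains the pattern `p`. -/
def consecContains {m n : ℕ} (p : Equiv.Perm (Fin m)) (x : Equiv.Perm (Fin n)) : Prop :=
  ∃ i : ℕ, consecAppearsAt p x i

/-- The pattern `2143 ∈ S₄` (`0`-based one-line notation: `1,0,3,2`). -/
def p2143 : Equiv.Perm (Fin 4) := Equiv.swap 0 1 * Equiv.swap 2 3

/-- The pattern `14325 ∈ S₅` (`0`-based one-line notation: `0,3,2,1,4`). -/
def p14325 : Equiv.Perm (Fin 5) := Equiv.swap 1 3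

/-- The pattern `1536247 ∈ S₇` (`0`-based one-line notation: `0,4,2,5,1,3,6`). -/
def p1536247 : Equiv.Perm (Fin 7) := Equiv.swap 1 4 * Equiv.swap 3 5

/-- The pattern `1462537 ∈ S₇` (`0`-based one-line notation: `0,3,5,1,4,2,6`). -/
def p1462537 : Equiv.Perm (Fin 7) := Equiv.swap 1 3 * Equiv.swap 2 5

/-- The pattern `1423 ∈ S₄` (`0`-based one-line notation: `0,3,1,2`). -/
def p1423 : Equiv.Perm (Fin 4) := Equiv.swap 1 2 * Equiv.swap 1 3

/-- The pattern `2314 ∈ S₄` (`0`-based one-line notation: `1,2,0,3`). -/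
def p2314 : Equiv.Perm (Fin 4) := Equiv.swap 0 2 * Equiv.swap 0 1

/-- The simple transposition `s_t = (t, t+1)` (`1`-based) as a permutation of `Fin n`
(junk value `1` if `t` is out of range). -/
def simpleT (n t : ℕ) : Equiv.Perm (Fin n) :=
  if h : 1 ≤ t ∧ t < n then Equiv.swap ⟨t - 1, by omega⟩ ⟨t, h.2⟩ else 1

/-- The product `s_a s_{a-1} ⋯ s_b` of simple transpositions with descending indices
(the identity if `b > a`). -/
def descProd (n a b : ℕ) : Equiv.Perm (Fin n) :=
  ((List.range (a + 1 - b)).map fun t => simpleT n (a - t)).prod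

/-- The product `s_a s_{a+1} ⋯ s_b` of simple transpositions with ascending indices
(the identity if `b < a`). -/
def ascProd (n a b : ℕ) : Equiv.Perm (Fin n) :=
  ((List.range (b + 1 - a)).map fun t => simpleT n (a + t)).prod

/-- `w s_b < w`, i.e. `s_b` is a right descent of `w`: `w(b) > w(b+1)` (`1`-based). -/
def rdes {n : ℕ} (w : Equiv.Perm (Fin n)) (b : ℕ) : Prop :=
  ∃ h : 1 ≤ b ∧ b < n, w ⟨b, h.2⟩ < w ⟨b - 1, by omega⟩

/-- `w s_b > w`, i.e. `s_b` is a right ascent of `w`: `w(b) < w(b+1)` (`1`-based). -/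
def rasc {n : ℕ} (w : Equiv.Perm (Fin n)) (b : ℕ) : Prop :=
  ∃ h : 1 ≤ b ∧ b < n, w ⟨b - 1, by omega⟩ < w ⟨b, h.2⟩

/-- `(W 1, …, W l)` is a strong right Bruhat walk: consecutive entries differ by right
multiplication by a simple transposition. -/
def isWalk {n : ℕ} (l : ℕ) (W : ℕ → Equiv.Perm (Fin n)) : Prop :=
  ∀ t : ℕ, 1 ≤ t → t + 1 ≤ l → ∃ b : ℕ, 1 ≤ b ∧ b < n ∧ W (t + 1) = W t * simpleT n b

/-- The walk `(W 1, …, W l)` is compatible with the reduced expression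
`s_{ι 1} s_{ι 2} ⋯ s_{ι l}`. -/
def compat {n : ℕ} (l : ℕ) (ι : ℕ → ℕ) (W : ℕ → Equiv.Perm (Fin n)) : Prop :=
  ∀ t : ℕ, 1 ≤ t → t ≤ l →
    rdes (W t) (ι t) ∧
    (2 ≤ t → rasc (W t) (ι (t - 1))) ∧
    (t + 1 ≤ l → rasc (W t) (ι (t + 1)))

/-- Membership in `X_{m,n}^i`: the one-line values at positions `i, i+1, …, i+m-1`
(`1`-based) are increasing. -/
def windowIncr {n : ℕ} (m i : ℕ) (x : Equiv.Perm (Fin n)) : Prop :=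
  ∀ a b : Fin n, i - 1 ≤ a.val → a < b → b.val < i - 1 + m → x a < x b

/-- The order-preserving identification of `Fin m` with the window
`{o, o+1, …, o+m-1}` inside `Fin n`. -/
def shiftEquiv (o m n : ℕ) (h : o + m ≤ n) :
    Fin m ≃ {x : Fin n // o ≤ x.val ∧ x.val < o + m} where
  toFun a := ⟨⟨o + a.val, by have := a.isLt; omega⟩, by
    refine ⟨Nat.le_add_right _ _, ?_⟩
    show o + a.val < o + m
    have := a.isLt; omega⟩
  invFun x := ⟨x.val.val - o, by have := x.prop; omega⟩
  left_inv a := by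
    apply Fin.ext
    show o + a.val - o = a.val
    omega
  right_inv x := by
    apply Subtype.ext
    apply Fin.ext
    show o + (x.val.val - o) = x.val.val
    have := x.prop
    omega

/-- The shift `F_{m,n}^i : S_m → S_n`, sending `i+a-1 ↦ i+p(a)-1` (`1`-based) and fixing
all other points. -/
def shiftPerm (m n i : ℕ) (h : i - 1 + m ≤ n) (p : Equiv.Perm (Fin m)) :
    Equiv.Perm (Fin n) :=
  Equiv.Perm.extendDomain p (shiftEquiv (i - 1) m n h)


lemma zval {n i : ℕ} (hn : 5 ≤ n) (hi : 3 ≤ i) (hi' : i ≤ n - 2) (t : Fin n) :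
    (((Equiv.swap ⟨i - 3, (by omega : i - 3 < n + 0)⟩ ⟨i, (by omega : i < n + 0)⟩ *
       Equiv.swap ⟨i - 2, (by omega : i - 2 < n + 0)⟩ ⟨i + 1, (by omega : i + 1 < n + 0)⟩ : Equiv.Perm (Fin n))) t).val =
      if t.val = i - 3 then i else if t.val = i - 2 then i + 1 else
      if t.val = i then i - 3 else if t.val = i + 1 then i - 2 else t.val := by
  simp only [Equiv.Perm.mul_apply, Equiv.swap_apply_def]
  split_ifs <;> simp only [Fin.ext_iff, Fin.val_mk] at * <;> omega

lemma zdesc {n i : ℕ} (hn : 5 ≤ n) (hi : 3 ≤ i) (hi' : i ≤ n - 2) (a b : Fin n)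
    (hab : a.val + 1 = b.val)
    (h : ((Equiv.swap ⟨i - 3, (by omega : i - 3 < n + 0)⟩ ⟨i, (by omega : i < n + 0)⟩ *
       Equiv.swap ⟨i - 2, (by omega : i - 2 < n + 0)⟩ ⟨i + 1, (by omega : i + 1 < n + 0)⟩ : Equiv.Perm (Fin n))) b <
         ((Equiv.swap ⟨i - 3, (by omega : i - 3 < n + 0)⟩ ⟨i, (by omega : i < n + 0)⟩ *
       Equiv.swap ⟨i - 2, (by omega : i - 2 < n + 0)⟩ ⟨i + 1, (by omega : i + 1 < n + 0)⟩ : Equiv.Perm (Fin n))) a) :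
    a.val = i - 2 ∨ a.val = i - 1 := by
  rw [Fin.lt_iff_val_lt_val, zval hn hi hi', zval hn hi hi'] at h
  split_ifs at h <;> omega

theorem stmt5 (n i : ℕ) (hn : 5 ≤ n) (hi : 3 ≤ i) (hi' : i ≤ n - 2)
    (z : Equiv.Perm (Fin n))
    (hz : z = Equiv.swap ⟨i - 3, by omega⟩ ⟨i, by omega⟩ *
              Equiv.swap ⟨i - 2, by omega⟩ ⟨i + 1, by omega⟩) :
    ¬ consecContains p2143 z ∧ ¬ consecContains p14325 z ∧
    ¬ consecContains p1536247 z ∧ ¬ consecContains p1462537 z := by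
  subst hz
  refine ⟨?_, ?_, ?_, ?_⟩
  · rintro ⟨j, ⟨h1, h2⟩, hiff⟩
    have d1 := zdesc hn hi hi' _ _ (by simp; try omega) ((hiff 1 0).mp (by decide))
    have d2 := zdesc hn hi hi' _ _ (by simp; try omega) ((hiff 3 2).mp (by decide))
    simp only [Fin.val_mk] at d1 d2
    omega
  · rintro ⟨j, ⟨h1, h2⟩, hiff⟩
    have d1 := zdesc hn hi hi' _ _ (by simp; try omega) ((hiff 2 1).mp (by decide))
    have d2 := zdesc hn hi hi' _ _ (by simp; try omega) ((hiff 3 2).mp (by decide))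
    simp only [Fin.val_mk] at d1 d2
    have h03 := (hiff 0 3).mp (by decide)
    rw [Fin.lt_iff_val_lt_val, zval hn hi hi', zval hn hi hi'] at h03
    simp only [Fin.val_mk] at h03
    split_ifs at h03 <;> omega
  · rintro ⟨j, ⟨h1, h2⟩, hiff⟩
    have d1 := zdesc hn hi hi' _ _ (by simp; try omega) ((hiff 2 1).mp (by decide))
    have d2 := zdesc hn hi hi' _ _ (by simp; try omega) ((hiff 4 3).mp (by decide))
    simp only [Fin.val_mk] at d1 d2
    omega
  · rintro ⟨j, ⟨h1, h2⟩, hiff⟩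
    have d1 := zdesc hn hi hi' _ _ (by simp; try omega) ((hiff 3 2).mp (by decide))
    have d2 := zdesc hn hi hi' _ _ (by simp; try omega) ((hiff 5 4).mp (by decide))
    simp only [Fin.val_mk] at d1 d2
    omega
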